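/- (Non-achievability for k ≥ α + 3) For α ≥ 2 and k ≥ α + 3, there is no linear exact-regenerating code over any finite field with B = kα, per-node storage α, β = 1, and d = α + k − 1 that exactly regenerates all systematic nodes. Equivalently, the repair bandwidth lower bound d = α + k − 1 with β = 1 is not achievable when k ≥ α + 3. -/

import Mathlib

structure MSRCode (F : Type*) [Field F] (k α s : ℕ) where
  G : (Fin k ⊕ Fin s) → Matrix (Fin α) (Fin k × Fin α) F
  systematic : ∀ (m : Fin k) (i : Fin α) (q : Fin k × Fin α),
    G (Sum.inl m) i q = if q.1 = m ∧ q.2 = i then 1 else 0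
  reconstruction : ∀ f : Fin k → (Fin k ⊕ Fin s), Function.Injective f →
    IsUnit (Matrix.det (Matrix.of fun p q : Fin k × Fin α => G (f p.1) p.2 q))
  regeneration : ∀ (l : Fin k) (D : Finset (Fin k ⊕ Fin s)),
    D.card = α + k - 1 → Sum.inl l ∉ D →
    ∃ (x : (Fin k ⊕ Fin s) → Fin α → F) (Y : Fin α → (Fin k ⊕ Fin s) → F),
      ∀ (i : Fin α) (q : Fin k × Fin α),
        G (Sum.inl l) i q = ∑ m ∈ D, Y i m * ∑ j, x m j * G m j q

open Matrix Finset

lemma core_lemma {F : Type*} [Field F] {α k : ℕ} (hα : 2 ≤ α) (hk : α + 3 ≤ k)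
    (C : Fin α → Fin k → Matrix (Fin α) (Fin α) F)
    (hC : ∀ m j, IsUnit (C m j).det)
    (hC0 : ∀ j, C ⟨0, by omega⟩ j = 1)
    (u : Fin α → Fin k → (Fin α → F))
    (halign : ∀ (m : Fin α) (l j : Fin k), j ≠ l →
      ∃ cc : F, (C m j) *ᵥ u m l = cc • u ⟨0, by omega⟩ l)
    (hindep : ∀ l, LinearIndependent F (fun m => (C m l) *ᵥ u m l)) : False := by
  classical
  have hα0 : 0 < α := by omega
  set m0 : Fin α := ⟨0, hα0⟩ with hm0def
  set m1 : Fin α := ⟨1, by omega⟩ with hm1def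
  have hm01 : m0 ≠ m1 := by simp [hm0def, hm1def, Fin.ext_iff]
  set x : Fin k → (Fin α → F) := fun l => u m0 l with hxdef
  have hCul : ∀ m l, (C m l) *ᵥ u m l ≠ 0 := fun m l => (hindep l).ne_zero m
  have hu : ∀ m l, u m l ≠ 0 := by
    intro m l h
    exact hCul m l (by rw [h, Matrix.mulVec_zero])
  have hx0 : ∀ l, x l ≠ 0 := fun l => hu m0 l
  have halign' : ∀ (m : Fin α) (l j : Fin k), ∃ cc : F, cc ≠ 0 ∧
      (j ≠ l → (C m j) *ᵥ u m l = cc • x l) := by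
    intro m l j
    by_cases hj : j ≠ l
    · obtain ⟨cc, hcc⟩ := halign m l j hj
      refine ⟨cc, ?_, fun _ => hcc⟩
      intro h0
      rw [h0, zero_smul] at hcc
      exact hu m l (Matrix.eq_zero_of_mulVec_eq_zero (hC m j).ne_zero hcc)
    · exact ⟨1, one_ne_zero, fun h => absurd h hj⟩
  choose c hc0 hceq using halign'
  -- inversion form
  have hinv : ∀ (m : Fin α) (l j : Fin k), j ≠ l →
      (C m j)⁻¹ *ᵥ x l = (c m l j)⁻¹ • u m l := by
    intro m l j hj
    have h := hceq m l j hj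
    have h2 : (C m j)⁻¹ *ᵥ ((C m j) *ᵥ u m l) = (C m j)⁻¹ *ᵥ ((c m l j) • x l) := by rw [h]
    rw [Matrix.mulVec_mulVec, Matrix.nonsing_inv_mul _ (hC m j), Matrix.one_mulVec,
      Matrix.mulVec_smul] at h2
    rw [h2, smul_smul, inv_mul_cancel₀ (hc0 m l j), one_smul]
  -- existence of a dependency with support of size ≤ α+1
  have hfr : Module.finrank F (Fin α → F) = α := Module.finrank_fin_fun F
  have hdepw : ∃ e : Fin k → F, e ≠ 0 ∧ (∑ l, e l • x l = 0) ∧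
      (Finset.univ.filter fun l => e l ≠ 0).card ≤ α + 1 := by
    obtain ⟨S, -, hScard⟩ := Finset.exists_subset_card_eq
      (s := (Finset.univ : Finset (Fin k))) (n := α + 1) (by simp; omega)
    have hnli : ¬ LinearIndependent F (fun l : ↥S => x l.1) := by
      intro h
      have h1 := h.fintype_card_le_finrank
      rw [hfr, Fintype.card_coe, hScard] at h1
      omega
    rw [Fintype.not_linearIndependent_iff] at hnli
    obtain ⟨g, hgsum, i0, hgi0⟩ := hnli
    refine ⟨fun l => if h : l ∈ S then g ⟨l, h⟩ else 0, ?_, ?_, ?_⟩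
    · intro h
      have := congrFun h i0.1
      simp [i0.2] at this
      exact hgi0 this
    · rw [← Finset.sum_subset (Finset.subset_univ S) (by intro l _ hl; simp [hl])]
      rw [← Finset.sum_attach S]
      simpa using hgsum
    · refine le_trans (Finset.card_le_card ?_) (le_of_eq hScard)
      intro l hl
      simp only [Finset.mem_filter] at hl
      by_contra hns
      simp [hns] at hl
  obtain ⟨ew, hew0, hewsum, hewcard⟩ := hdepw
  have hdep0 : ∃ n : ℕ, ∃ e : Fin k → F, e ≠ 0 ∧ (∑ l, e l • x l = 0) ∧
      (Finset.univ.filter fun l => e l ≠ 0).card = n :=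
    ⟨_, ew, hew0, hewsum, rfl⟩
  set n0 := Nat.find hdep0 with hn0def
  obtain ⟨e, he0, hesum, hecard⟩ := Nat.find_spec hdep0
  have hn0le : n0 ≤ α + 1 :=
    le_trans (Nat.find_le ⟨ew, hew0, hewsum, rfl⟩) hewcard
  set T : Finset (Fin k) := Finset.univ.filter fun l => e l ≠ 0 with hTdef
  have hTcard : T.card = n0 := hecard
  obtain ⟨l0, hl0⟩ : ∃ l, e l ≠ 0 := by
    by_contra h
    push_neg at h
    exact he0 (funext fun l => h l)
  have hl0T : l0 ∈ T := by simp [hTdef, hl0]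
  have heT : ∀ l, l ∈ T ↔ e l ≠ 0 := by intro l; simp [hTdef]
  have hesumT : ∑ l ∈ T, e l • x l = 0 := by
    rw [Finset.sum_subset (Finset.subset_univ T) ?_]
    · exact hesum
    · intro l _ hl
      rw [heT] at hl
      push_neg at hl
      rw [hl, zero_smul]
  have hesumE : e l0 • x l0 + ∑ l ∈ T.erase l0, e l • x l = 0 :=
    (Finset.add_sum_erase T (fun l => e l • x l) hl0T).trans hesumT
  -- Step 2 : α + 1 ≤ n0
  have hstep2 : α + 1 ≤ n0 := by
    obtain ⟨j1, hj1⟩ : ∃ j1, j1 ∉ T := by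
      by_contra h
      push_neg at h
      have : (Finset.univ : Finset (Fin k)) ⊆ T := fun l _ => h l
      have := Finset.card_le_card this
      simp [hTcard] at this
      omega
    have hj1T : ∀ l ∈ T, j1 ≠ l := fun l hl hf => hj1 (hf ▸ hl)
    set W := Submodule.span F (↑((T.erase l0).image x) : Set (Fin α → F)) with hWdef
    have hxW : ∀ l ∈ T.erase l0, x l ∈ W := by
      intro l hl
      refine Submodule.subset_span ?_
      simp only [Finset.coe_image, Set.mem_image, Finset.mem_coe]
      exact ⟨l, hl, rfl⟩
    have hyW : ∀ m : Fin α, (C m l0 *ᵥ u m l0) ∈ W := by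
      intro m
      have h2 := congrArg (Matrix.mulVecLin ((C m j1)⁻¹)) hesumT
      rw [map_sum, map_zero] at h2
      simp only [_root_.map_smul, Matrix.mulVecLin_apply] at h2
      rw [Finset.sum_congr rfl (fun l hl => by
        rw [hinv m l j1 (hj1T l hl)])] at h2
      have h3 := congrArg (Matrix.mulVecLin (C m l0)) h2
      rw [map_sum, map_zero] at h3
      simp only [_root_.map_smul, Matrix.mulVecLin_apply] at h3
      rw [← Finset.add_sum_erase _ _ hl0T] at h3
      -- h3 : e l0 • (c m l0 j1)⁻¹ • (C m l0 *ᵥ u m l0) + ∑ ... = 0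
      have hcoef : (e l0 * (c m l0 j1)⁻¹) ≠ 0 :=
        mul_ne_zero hl0 (inv_ne_zero (hc0 m l0 j1))
      have h4 : (C m l0 *ᵥ u m l0) = (e l0 * (c m l0 j1)⁻¹)⁻¹ •
          (-(∑ l ∈ T.erase l0, e l • (c m l j1)⁻¹ • (C m l0 *ᵥ u m l))) := by
        rw [← eq_neg_iff_add_eq_zero] at h3
        rw [← h3, smul_smul, smul_smul, mul_assoc, inv_mul_cancel₀ hcoef, one_smul]
      rw [h4]
      refine Submodule.smul_mem _ _ (Submodule.neg_mem _ (Submodule.sum_mem _ ?_))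
      intro l hl
      have hll0 : l0 ≠ l := fun hf => (Finset.mem_erase.mp hl).1 hf.symm
      rw [hceq m l l0 hll0]
      exact Submodule.smul_mem _ _ (Submodule.smul_mem _ _
        (Submodule.smul_mem _ _ (hxW l hl)))
    have hyW' : LinearIndependent F (fun m : Fin α => (⟨C m l0 *ᵥ u m l0, hyW m⟩ : W)) := by
      apply LinearIndependent.of_comp W.subtype
      exact hindep l0
    have h5 : α ≤ Module.finrank F W := by
      have := hyW'.fintype_card_le_finrank
      simpa using this
    have h6 : Module.finrank F W ≤ (T.erase l0).card := by
      refine le_trans ?_ (Finset.card_image_le (f := x) (s := T.erase l0))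
      exact finrank_span_finset_le_card _
    have h7 : (T.erase l0).card = n0 - 1 := by
      rw [Finset.card_erase_of_mem hl0T, hTcard]
    omega
  have hn0 : n0 = α + 1 := le_antisymm hn0le hstep2
  have hmin : ∀ e' : Fin k → F, (∑ l, e' l • x l = 0) →
      (Finset.univ.filter fun l => e' l ≠ 0).card ≤ α → e' = 0 := by
    intro e' h1 h2
    by_contra hne
    have hP : (fun n => ∃ e : Fin k → F, e ≠ 0 ∧ (∑ l, e l • x l = 0) ∧
        (Finset.univ.filter fun l => e l ≠ 0).card = n)
        ((Finset.univ.filter fun l => e' l ≠ 0).card) := ⟨e', hne, h1, rfl⟩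
    have h15 : n0 ≤ (Finset.univ.filter fun l => e' l ≠ 0).card := Nat.find_le hP
    omega
  -- two indices outside T
  obtain ⟨j1, hj1m, j2, hj2m, hj12⟩ : ∃ j1 ∈ Finset.univ \ T, ∃ j2 ∈ Finset.univ \ T,
      j1 ≠ j2 := by
    apply Finset.one_lt_card.mp
    rw [Finset.card_sdiff_of_subset (Finset.subset_univ T), Finset.card_univ, Fintype.card_fin,
      hTcard, hn0]
    omega
  have hj1 : j1 ∉ T := (Finset.mem_sdiff.mp hj1m).2
  have hj2 : j2 ∉ T := (Finset.mem_sdiff.mp hj2m).2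
  have hj1T : ∀ l ∈ T, j1 ≠ l := fun l hl hf => hj1 (hf ▸ hl)
  have hj2T : ∀ l ∈ T, j2 ≠ l := fun l hl hf => hj2 (hf ▸ hl)
  set D : Matrix (Fin α) (Fin α) F := C m1 j2 * (C m1 j1)⁻¹ with hDdef
  set lam : Fin k → F := fun l => (c m1 l j1)⁻¹ * c m1 l j2 with hlamdef
  have hD : ∀ l : Fin k, j1 ≠ l → j2 ≠ l → D *ᵥ x l = lam l • x l := by
    intro l h1 h2
    rw [hDdef, ← Matrix.mulVec_mulVec, hinv m1 l j1 h1, Matrix.mulVec_smul,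
      hceq m1 l j2 h2, smul_smul]
  -- lam is constant on T
  have hDT : ∀ l ∈ T, D *ᵥ x l = lam l • x l := fun l hl => hD l (hj1T l hl) (hj2T l hl)
  have hlamT : ∀ l ∈ T.erase l0, lam l = lam l0 := by
    have h81 := congrArg (Matrix.mulVecLin D) hesumE
    rw [map_add, map_sum, map_zero, _root_.map_smul, Matrix.mulVecLin_apply,
      hDT l0 hl0T] at h81
    rw [Finset.sum_congr rfl (fun l hl => by
      rw [_root_.map_smul, Matrix.mulVecLin_apply, hDT l (Finset.mem_of_mem_erase hl)])] at h81
    have h82 := congrArg (fun v => lam l0 • v) hesumE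
    simp only [smul_add, smul_zero, Finset.smul_sum] at h82
    have h9 : ∑ l ∈ T.erase l0, ((e l * lam l) - (lam l0 * e l)) • x l = 0 := by
      have hterm1 : ∀ l : Fin k, e l • lam l • x l = (e l * lam l) • x l := by
        intro l; rw [smul_smul]
      have hterm2 : ∀ l : Fin k, lam l0 • e l • x l = (lam l0 * e l) • x l := by
        intro l; rw [smul_smul]
      simp only [hterm1] at h81
      simp only [hterm2] at h82
      have hc12 : (e l0 * lam l0) • x l0 = (lam l0 * e l0) • x l0 := by rw [mul_comm]
      rw [hc12] at h81
      simp only [sub_smul, Finset.sum_sub_distrib]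
      have h83 : ∑ l ∈ T.erase l0, (e l * lam l) • x l = -((lam l0 * e l0) • x l0) :=
        eq_neg_of_add_eq_zero_right h81
      have h84 : ∑ l ∈ T.erase l0, (lam l0 * e l) • x l = -((lam l0 * e l0) • x l0) :=
        eq_neg_of_add_eq_zero_right h82
      rw [h83, h84, sub_self]
    set e'' : Fin k → F := fun l =>
      if l ∈ T.erase l0 then (e l * lam l - lam l0 * e l) else 0 with he''def
    have h10 : ∑ l, e'' l • x l = 0 := by
      have hcong : ∑ l ∈ T.erase l0, e'' l • x l =
          ∑ l ∈ T.erase l0, ((e l * lam l) - (lam l0 * e l)) • x l :=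
        Finset.sum_congr rfl (fun l hl => by simp only [he''def]; rw [if_pos hl])
      rw [← Finset.sum_subset (Finset.subset_univ (T.erase l0))
        (fun l _ hl => by simp only [he''def]; rw [if_neg hl, zero_smul]), hcong]
      exact h9
    have h11 : (Finset.univ.filter fun l => e'' l ≠ 0).card ≤ α := by
      have hsub : (Finset.univ.filter fun l => e'' l ≠ 0) ⊆ T.erase l0 := by
        intro l hl
        rw [Finset.mem_filter] at hl
        by_contra hns
        apply hl.2
        simp only [he''def]
        rw [if_neg hns]
      have hcc := Finset.card_le_card hsub
      rw [Finset.card_erase_of_mem hl0T, hTcard, hn0] at hcc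
      omega
    have h12 := hmin e'' h10 h11
    intro l hl
    have h13 := congrFun h12 l
    simp only [he''def, if_pos hl, Pi.zero_apply] at h13
    have hel : e l ≠ 0 := by
      have := Finset.mem_of_mem_erase hl
      rw [heT] at this
      exact this
    have h14 : e l * (lam l - lam l0) = 0 := by linear_combination h13
    rcases mul_eq_zero.mp h14 with h | h
    · exact absurd h hel
    · exact sub_eq_zero.mp h
  -- x is spanning on T.erase l0 and D acts as the scalar lam l0
  have hcardE : Fintype.card ↥(T.erase l0) = α := by
    rw [Fintype.card_coe, Finset.card_erase_of_mem hl0T, hTcard, hn0]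
    omega
  have hliE : LinearIndependent F (fun l : ↥(T.erase l0) => x l.1) := by
    rw [Fintype.linearIndependent_iff]
    intro g hg i
    set e' : Fin k → F := fun j => if h : j ∈ T.erase l0 then g ⟨j, h⟩ else 0 with he'def
    have hsum' : ∑ j, e' j • x j = 0 := by
      have hcong : ∑ l ∈ (T.erase l0).attach, e' l.1 • x l.1 =
          ∑ l ∈ (T.erase l0).attach, g l • x l.1 :=
        Finset.sum_congr rfl (fun l _ => by simp only [he'def]; rw [dif_pos l.2])
      rw [← Finset.sum_subset (Finset.subset_univ (T.erase l0))
        (fun l _ hl => by simp only [he'def]; rw [dif_neg hl, zero_smul])]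
      rw [← Finset.sum_attach (T.erase l0) (fun j => e' j • x j), hcong]
      exact hg
    have hbnd : (Finset.univ.filter fun l => e' l ≠ 0).card ≤ α := by
      have hsub : (Finset.univ.filter fun l => e' l ≠ 0) ⊆ T.erase l0 := by
        intro l hl
        rw [Finset.mem_filter] at hl
        by_contra hns
        apply hl.2
        simp only [he'def]
        rw [dif_neg hns]
      have hcc := Finset.card_le_card hsub
      rw [Finset.card_erase_of_mem hl0T, hTcard, hn0] at hcc
      omega
    have h13 := hmin e' hsum' hbnd
    have h14 := congrFun h13 i.1
    simp only [he'def] at h14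
    rw [dif_pos i.2] at h14
    exact h14
  have hnonempty : Nonempty ↥(T.erase l0) := by
    rw [← Fintype.card_pos_iff, hcardE]
    omega
  let b := basisOfLinearIndependentOfCardEqFinrank hliE (by rw [hcardE, hfr])
  have hspan : ∀ w : Fin α → F, D *ᵥ w = lam l0 • w := by
    have hmapeq : (Matrix.mulVecLin D) =
        (lam l0) • (LinearMap.id (R := F) (M := Fin α → F)) := by
      apply b.ext
      intro i
      have hbi : b i = x i.1 := by
        show (basisOfLinearIndependentOfCardEqFinrank hliE _) i = _
        rw [coe_basisOfLinearIndependentOfCardEqFinrank]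
      rw [hbi]
      simp only [Matrix.mulVecLin_apply, LinearMap.smul_apply, LinearMap.id_apply]
      rw [hD i.1 (hj1T _ (Finset.mem_of_mem_erase i.2)) (hj2T _ (Finset.mem_of_mem_erase i.2))]
      rw [hlamT i.1 i.2]
    intro w
    have := LinearMap.congr_fun hmapeq w
    simpa using this
  -- final contradiction at l = j2
  have hkey := hceq m1 j2 j1 hj12
  have hfin : C m1 j2 *ᵥ u m1 j2 = (lam l0 * c m1 j2 j1) • x j2 := by
    have h1 := hspan (C m1 j1 *ᵥ u m1 j2)
    have h2 : D * C m1 j1 = C m1 j2 := by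
      rw [hDdef, Matrix.mul_assoc, Matrix.nonsing_inv_mul _ (hC m1 j1), Matrix.mul_one]
    rw [Matrix.mulVec_mulVec, h2] at h1
    rw [h1, hkey, smul_smul]
  have hx2 : x j2 = C m0 j2 *ᵥ u m0 j2 := by
    rw [hC0 j2, Matrix.one_mulVec]
  have hcontra := Fintype.linearIndependent_iff.mp (hindep j2)
  set g : Fin α → F := fun m =>
    if m = m1 then 1 else if m = m0 then -(lam l0 * c m1 j2 j1) else 0 with hgdef
  have hgsum : ∑ m, g m • (C m j2 *ᵥ u m j2) = 0 := by
    rw [← Finset.sum_subset (Finset.subset_univ {m0, m1}) (fun m _ hm => by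
      simp only [Finset.mem_insert, Finset.mem_singleton] at hm
      push_neg at hm
      simp [hgdef, hm.1, hm.2])]
    rw [Finset.sum_pair hm01]
    have hg0 : g m0 = -(lam l0 * c m1 j2 j1) := by simp [hgdef, hm01]
    have hg1 : g m1 = 1 := by simp [hgdef]
    rw [hg0, hg1, hfin, ← hx2, one_smul, neg_smul]
    exact neg_add_cancel _
  have hfinal := hcontra g hgsum m1
  simp [hgdef] at hfinal

set_option maxHeartbeats 1000000 in
/-- Non-achievability for `k ≥ α + 3`: for `α ≥ 2` and `k ≥ α + 3` there is no linear
exact-regenerating code over any finite field with `B = kα`, per-node storage `α`,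
`β = 1`, and `d = α + k - 1` that exactly regenerates all systematic nodes
(with at least `α` non-systematic nodes, so that helper sets exist). -/
theorem statement16 {F : Type*} [Field F] [Fintype F] (k α s : ℕ)
    (hα : 2 ≤ α) (hk : α + 3 ≤ k) (hs : α ≤ s) :
    IsEmpty (MSRCode F k α s) := by

  constructor
  intro code
  classical
  have hα0 : 0 < α := by omega
  set ι : Fin α → Fin s := Fin.castLE hs with hιdef
  have hιinj : Function.Injective ι := Fin.castLE_injective hs
  set A : Fin α → Fin k → Matrix (Fin α) (Fin α) F :=
    fun m j => Matrix.of fun i t => code.G (Sum.inr (ι m)) i (j, t) with hAdef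
  -- every block of a non-systematic node is invertible
  have hA : ∀ m j, IsUnit (A m j).det := by
    intro m j
    set f : Fin k → Fin k ⊕ Fin s :=
      fun p => if p = j then Sum.inr (ι m) else Sum.inl p with hfdef
    have hfinj : Function.Injective f := by
      intro p1 p2 h
      by_cases h1 : p1 = j <;> by_cases h2 : p2 = j
      · rw [h1, h2]
      · rw [hfdef] at h
        simp only [if_pos h1, if_neg h2] at h
        exact absurd h (by simp)
      · rw [hfdef] at h
        simp only [if_neg h1, if_pos h2] at h
        exact absurd h (by simp)
      · rw [hfdef] at h
        simp only [if_neg h1, if_neg h2] at h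
        exact Sum.inl_injective h
    have hM := code.reconstruction f hfinj
    rw [isUnit_iff_ne_zero]
    intro hdet
    have hdetT : ((A m j)ᵀ).det = 0 := by rw [Matrix.det_transpose]; exact hdet
    obtain ⟨v, hv, hv0⟩ := Matrix.exists_mulVec_eq_zero_iff.mpr hdetT
    set w : Fin k × Fin α → F := fun pi =>
      if pi.1 = j then v pi.2
      else -∑ i', v i' * code.G (Sum.inr (ι m)) i' (pi.1, pi.2) with hwdef
    have hAv : ∀ t, ∑ i, v i * code.G (Sum.inr (ι m)) i (j, t) = 0 := by
      intro t
      have := congrFun hv0 t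
      simpa [Matrix.mulVec, dotProduct, Matrix.transpose_apply, hAdef,
        mul_comm] using this
    have hwM : ∀ q : Fin k × Fin α,
        ∑ pi : Fin k × Fin α, w pi * code.G (f pi.1) pi.2 q = 0 := by
      intro q
      rw [Fintype.sum_prod_type]
      rw [← Finset.add_sum_erase Finset.univ
        (fun p => ∑ i, w (p, i) * code.G (f p) i q) (Finset.mem_univ j)]
      have hhead : ∑ i, w (j, i) * code.G (f j) i q =
          ∑ i, v i * code.G (Sum.inr (ι m)) i q := by
        refine Finset.sum_congr rfl (fun i _ => ?_)
        rw [hwdef, hfdef]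
        simp
      have hrest : ∀ p ∈ Finset.univ.erase j,
          ∑ i, w (p, i) * code.G (f p) i q = if q.1 = p then w (p, q.2) else 0 := by
        intro p hp
        have hpj : p ≠ j := (Finset.mem_erase.mp hp).1
        have hGp : ∀ i, code.G (f p) i q = if q.1 = p ∧ q.2 = i then 1 else 0 := by
          intro i
          rw [hfdef]
          simp only [if_neg hpj]
          exact code.systematic p i q
        rw [Finset.sum_congr rfl (fun i _ => by rw [hGp i])]
        simp only [mul_ite, mul_one, mul_zero, ite_and]
        by_cases hq : q.1 = p
        · simp [hq, Finset.sum_ite_eq]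
        · simp [hq]
      rw [hhead, Finset.sum_congr rfl hrest]
      by_cases hqj : q.1 = j
      · have hz : ∑ p ∈ Finset.univ.erase j, (if q.1 = p then w (p, q.2) else 0) = 0 := by
          refine Finset.sum_eq_zero (fun p hp => ?_)
          rw [if_neg]
          intro h
          exact (Finset.mem_erase.mp hp).1 (by rw [← h, hqj])
        rw [hz, add_zero]
        have : q = (j, q.2) := by rw [← hqj]
        rw [this]
        exact hAv q.2
      · rw [Finset.sum_ite_eq, if_pos (Finset.mem_erase.mpr ⟨hqj, Finset.mem_univ _⟩)]
        have hwq : w (q.1, q.2) = -∑ i', v i' * code.G (Sum.inr (ι m)) i' (q.1, q.2) := by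
          rw [hwdef]
          simp only [if_neg hqj]
        rw [hwq]
        have : q = (q.1, q.2) := rfl
        rw [← this]
        exact add_neg_cancel _
    have hwzero : w = 0 := by
      apply Matrix.eq_zero_of_vecMul_eq_zero hM.ne_zero
      funext q
      simpa [Matrix.vecMul, dotProduct] using hwM q
    apply hv
    funext i
    have := congrFun hwzero (j, i)
    rw [hwdef] at this
    simpa using this
  -- normalized matrices
  set B : Fin α → Fin k → Matrix (Fin α) (Fin α) F := fun m j => (A m j)ᵀ with hBdef
  have hB : ∀ m j, IsUnit (B m j).det := by
    intro m j
    rw [hBdef]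
    simp only
    rw [Matrix.det_transpose]
    exact hA m j
  set mz : Fin α := ⟨0, hα0⟩ with hmzdef
  set Cm : Fin α → Fin k → Matrix (Fin α) (Fin α) F :=
    fun m j => (B mz j)⁻¹ * B m j with hCmdef
  have hCu : ∀ m j, IsUnit (Cm m j).det := by
    intro m j
    rw [hCmdef]
    simp only
    rw [Matrix.det_mul]
    exact (Matrix.isUnit_nonsing_inv_det _ (hB mz j)).mul (hB m j)
  have hC0 : ∀ j, Cm mz j = 1 := fun j => Matrix.nonsing_inv_mul _ (hB mz j)
  have main : ∀ l : Fin k, ∃ uu : Fin α → (Fin α → F),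
      (∀ (m : Fin α) (j : Fin k), j ≠ l → ∃ cc : F, (Cm m j) *ᵥ uu m = cc • uu mz) ∧
      LinearIndependent F (fun m => (Cm m l) *ᵥ uu m) := by
    intro l
    set Dl : Finset (Fin k ⊕ Fin s) :=
      ((Finset.univ.erase l).image Sum.inl) ∪
        (Finset.univ.image fun m : Fin α => Sum.inr (ι m)) with hDldef
    have hdisj : Disjoint ((Finset.univ.erase l).image Sum.inl)
        (Finset.univ.image fun m : Fin α => Sum.inr (ι m)) := by
      rw [Finset.disjoint_left]
      intro a ha hb
      obtain ⟨p, -, rfl⟩ := Finset.mem_image.mp ha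
      obtain ⟨m', -, hm'⟩ := Finset.mem_image.mp hb
      exact absurd hm' (by simp)
    have hDcard : Dl.card = α + k - 1 := by
      rw [hDldef, Finset.card_union_of_disjoint hdisj,
        Finset.card_image_of_injective _ Sum.inl_injective,
        Finset.card_image_of_injective _ (fun a b h => hιinj (Sum.inr_injective h) : Function.Injective fun m : Fin α => Sum.inr (ι m)),
        Finset.card_erase_of_mem (Finset.mem_univ l), Finset.card_univ, Finset.card_univ,
        Fintype.card_fin, Fintype.card_fin]
      omega
    have hlD : Sum.inl l ∉ Dl := by
      rw [hDldef]
      simp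
    obtain ⟨xx, Y, hreg⟩ := code.regeneration l Dl hDcard hlD
    set uu : Fin α → Fin α → F := fun m => xx (Sum.inr (ι m)) with huudef
    set vv : Fin α → Fin k → Fin α → F := fun m j => (B m j) *ᵥ uu m with hvvdef
    have key : ∀ (i : Fin α) (j : Fin k) (t : Fin α),
        code.G (Sum.inl l) i (j, t) =
          (if j = l then 0 else Y i (Sum.inl j) * xx (Sum.inl j) t) +
          ∑ m : Fin α, Y i (Sum.inr (ι m)) * vv m j t := by
      intro i j t
      rw [hreg i (j, t), hDldef, Finset.sum_union hdisj,
        Finset.sum_image (fun p _ p' _ h => Sum.inl_injective h),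
        Finset.sum_image (fun m _ m' _ h => hιinj (Sum.inr_injective h))]
      congr 1
      · have hterm : ∀ p ∈ Finset.univ.erase l,
            Y i (Sum.inl p) * ∑ j', xx (Sum.inl p) j' * code.G (Sum.inl p) j' (j, t) =
            if j = p then Y i (Sum.inl p) * xx (Sum.inl p) t else 0 := by
          intro p hp
          have hin : ∑ j', xx (Sum.inl p) j' * code.G (Sum.inl p) j' (j, t) =
              if j = p then xx (Sum.inl p) t else 0 := by
            rw [Finset.sum_congr rfl (fun j' _ => by rw [code.systematic])]
            simp only [mul_ite, mul_one, mul_zero, ite_and]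
            by_cases hj : j = p
            · simp [hj, Finset.sum_ite_eq]
            · simp [hj]
          rw [hin]
          by_cases hj : j = p
          · rw [if_pos hj, if_pos hj]
          · rw [if_neg hj, if_neg hj, mul_zero]
        rw [Finset.sum_congr rfl hterm]
        by_cases hjl : j = l
        · rw [if_pos hjl]
          refine Finset.sum_eq_zero (fun p hp => ?_)
          rw [if_neg]
          intro h
          exact (Finset.mem_erase.mp hp).1 (by rw [← h, hjl])
        · rw [if_neg hjl, Finset.sum_ite_eq,
            if_pos (Finset.mem_erase.mpr ⟨hjl, Finset.mem_univ _⟩)]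
      · refine Finset.sum_congr rfl (fun m _ => ?_)
        congr 1
        have hvt : vv m j t = ∑ i', code.G (Sum.inr (ι m)) i' (j, t) * xx (Sum.inr (ι m)) i' := by
          rw [hvvdef]
          simp [hBdef, huudef, hAdef, Matrix.mulVec, dotProduct,
            Matrix.transpose_apply]
        rw [hvt]
        exact Finset.sum_congr rfl (fun i' _ => mul_comm _ _)
    set Yh : Matrix (Fin α) (Fin α) F := Matrix.of fun i m => Y i (Sum.inr (ι m)) with hYhdef
    set V : Matrix (Fin α) (Fin α) F := Matrix.of fun m t => vv m l t with hVdef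
    have hYV : Yh * V = 1 := by
      ext i t
      have h1 := key i l t
      rw [if_pos rfl, zero_add] at h1
      rw [code.systematic] at h1
      have h2 : ∑ m : Fin α, Y i (Sum.inr (ι m)) * vv m l t = if t = i then 1 else 0 := by
        rw [← h1]
        simp
      rw [Matrix.mul_apply]
      simp only [hYhdef, hVdef, Matrix.of_apply]
      rw [h2, Matrix.one_apply]
      by_cases hti : t = i
      · rw [if_pos hti, if_pos hti.symm]
      · rw [if_neg hti, if_neg (Ne.symm hti)]
    have hVYh : V * Yh = 1 := mul_eq_one_comm.mp hYV
    have hVdet : IsUnit V.det := by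
      have hd := congrArg Matrix.det hYV
      rw [Matrix.det_mul, Matrix.det_one] at hd
      exact IsUnit.of_mul_eq_one _ (by rw [mul_comm]; exact hd)
    have huuz : uu mz ≠ 0 := by
      intro h0
      have hrow : ∀ t, V mz t = 0 := by
        intro t
        simp [hVdef, hvvdef, h0, Matrix.mulVec_zero]
      exact hVdet.ne_zero (Matrix.det_eq_zero_of_row_eq_zero mz hrow)
    have halignj : ∀ j : Fin k, j ≠ l → ∀ m' : Fin α,
        vv m' j = (-(∑ i, V m' i * Y i (Sum.inl j))) • xx (Sum.inl j) := by
      intro j hj m'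
      funext t
      have hEq2 : ∀ i, ∑ m : Fin α, Y i (Sum.inr (ι m)) * vv m j t
          = -(Y i (Sum.inl j) * xx (Sum.inl j) t) := by
        intro i
        have h1 := key i j t
        rw [if_neg hj] at h1
        rw [code.systematic] at h1
        rw [if_neg (by simp [hj])] at h1
        linear_combination -h1
      have h3 : vv m' j t = ∑ i, V m' i * (∑ m, Y i (Sum.inr (ι m)) * vv m j t) := by
        rw [Finset.sum_congr rfl (fun i (_ : i ∈ Finset.univ) => Finset.mul_sum _ _ _)]
        rw [Finset.sum_comm]
        have h4 : ∀ m, ∑ i, V m' i * (Y i (Sum.inr (ι m)) * vv m j t)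
            = (V * Yh) m' m * vv m j t := by
          intro m
          rw [Matrix.mul_apply, Finset.sum_mul]
          refine Finset.sum_congr rfl (fun i _ => ?_)
          rw [hYhdef]
          simp only [Matrix.of_apply]
          ring
        rw [Finset.sum_congr rfl (fun m (_ : m ∈ Finset.univ) => h4 m), hVYh]
        simp only [Matrix.one_apply]
        rw [Finset.sum_congr rfl (fun m (_ : m ∈ Finset.univ) => ite_mul _ _ _ _)]
        simp only [one_mul, zero_mul]
        rw [Finset.sum_ite_eq, if_pos (Finset.mem_univ m')]
      calc vv m' j t = ∑ i, V m' i * -(Y i (Sum.inl j) * xx (Sum.inl j) t) := by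
            rw [h3]
            exact Finset.sum_congr rfl (fun i _ => by rw [hEq2 i])
        _ = (∑ i, -(V m' i * Y i (Sum.inl j))) * xx (Sum.inl j) t := by
            rw [Finset.sum_mul]
            exact Finset.sum_congr rfl (fun i _ => by ring)
        _ = (-(∑ i, V m' i * Y i (Sum.inl j))) * xx (Sum.inl j) t := by
            rw [Finset.sum_neg_distrib]
        _ = ((-(∑ i, V m' i * Y i (Sum.inl j))) • xx (Sum.inl j)) t := by
            rw [Pi.smul_apply, smul_eq_mul]
    refine ⟨uu, ?_, ?_⟩
    · intro m j hj
      have hm' := halignj j hj m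
      have hmz := halignj j hj mz
      set cz : F := -(∑ i, V mz i * Y i (Sum.inl j)) with hczdef
      set cm : F := -(∑ i, V m i * Y i (Sum.inl j)) with hcmdef
      have hvmz : vv mz j ≠ 0 := by
        intro h0
        exact huuz (Matrix.eq_zero_of_mulVec_eq_zero (hB mz j).ne_zero h0)
      have hcz0 : cz ≠ 0 := by
        intro h0
        apply hvmz
        rw [hmz, h0, zero_smul]
      refine ⟨cm * cz⁻¹, ?_⟩
      have e1 : (Cm m j) *ᵥ uu m = cm • ((B mz j)⁻¹ *ᵥ xx (Sum.inl j)) := by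
        rw [hCmdef]
        simp only
        rw [← Matrix.mulVec_mulVec, show (B m j) *ᵥ uu m = vv m j from rfl, hm',
          Matrix.mulVec_smul]
      have e2 : uu mz = cz • ((B mz j)⁻¹ *ᵥ xx (Sum.inl j)) := by
        have hinv2 : (B mz j)⁻¹ *ᵥ ((B mz j) *ᵥ uu mz) = uu mz := by
          rw [Matrix.mulVec_mulVec, Matrix.nonsing_inv_mul _ (hB mz j), Matrix.one_mulVec]
        rw [← hinv2, show (B mz j) *ᵥ uu mz = vv mz j from rfl, hmz,
          Matrix.mulVec_smul]
      rw [e1, e2, smul_smul, mul_assoc, inv_mul_cancel₀ hcz0, mul_one]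
    · rw [Fintype.linearIndependent_iff]
      intro g hg m'
      have h5 : ∑ m, g m • ((Cm m l) *ᵥ uu m) =
          (Matrix.mulVecLin ((B mz l)⁻¹)) (∑ m, g m • vv m l) := by
        rw [map_sum]
        refine Finset.sum_congr rfl (fun m _ => ?_)
        rw [_root_.map_smul, Matrix.mulVecLin_apply, hCmdef]
        simp only
        rw [← Matrix.mulVec_mulVec]
      have h6 : ∑ m, g m • vv m l = 0 := by
        have h7 : (Matrix.mulVecLin ((B mz l)⁻¹)) (∑ m, g m • vv m l) = 0 := by
          rw [← h5, hg]
        calc ∑ m, g m • vv m l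
            = (B mz l * (B mz l)⁻¹) *ᵥ (∑ m, g m • vv m l) := by
              rw [Matrix.mul_nonsing_inv _ (hB mz l), Matrix.one_mulVec]
          _ = B mz l *ᵥ ((B mz l)⁻¹ *ᵥ (∑ m, g m • vv m l)) :=
              (Matrix.mulVec_mulVec _ _ _).symm
          _ = B mz l *ᵥ 0 := by
              rw [show (B mz l)⁻¹ *ᵥ (∑ m, g m • vv m l) =
                (Matrix.mulVecLin ((B mz l)⁻¹)) (∑ m, g m • vv m l) from rfl, h7]
          _ = 0 := Matrix.mulVec_zero _
      have h8 : g ᵥ* V = 0 := by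
        funext t
        have h9 := congrFun h6 t
        simpa [Matrix.vecMul, dotProduct, hVdef, Finset.sum_apply] using h9
      have h10 := congrArg (fun z => z ᵥ* Yh) h8
      simp only [Matrix.vecMul_vecMul, hVYh, Matrix.vecMul_one, Matrix.zero_vecMul] at h10
      exact congrFun h10 m'
  choose uu halignU hindepU using main
  exact core_lemma hα hk Cm hCu hC0 (fun m l => uu l m)
    (fun m l j hj => halignU l m j hj) (fun l => hindepU l)
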